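/- Let C be a linear subspace of B_b containing the constant functions and let H : C → ℝ be a convex premium principle. For a normalized positive linear functional μ on B_b and X ∈ C, set D_μ(X) := H(X − μ(X)) (where μ(X) is subtracted as a constant function). Then for every X ∈ C, D_Min(X) = min over all normalized positive linear functionals μ with H*(μ) < ∞ of (D_μ(X) + H*(μ)), and this minimum is attained. -/

import Mathlib

open Pointwise

lemma exists_subgradient' {E : Type*} [AddCommGroup E] [Module ℝ E] (φ : E → ℝ)
    (hφ0 : φ 0 = 0)
    (hconv : ∀ Y Z : E, ∀ l : ℝ, 0 ≤ l → l ≤ 1 →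
      φ (l • Y + (1 - l) • Z) ≤ l * φ Y + (1 - l) * φ Z) :
    ∃ g : E →ₗ[ℝ] ℝ, ∀ Z, g Z ≤ φ Z := by
  -- scaling: φ (l • Z) ≤ l * φ Z for l ∈ [0,1]
  have hscale : ∀ (Z : E) (l : ℝ), 0 ≤ l → l ≤ 1 → φ (l • Z) ≤ l * φ Z := by
    intro Z l h0 h1
    have := hconv Z 0 l h0 h1
    simpa [hφ0] using this
  set q : E → ℝ → ℝ := fun Y t => φ (t • Y) / t with hq
  -- lower bound for quotients
  have hlb : ∀ (Y : E) (t : ℝ), 0 < t → -φ (-Y) ≤ q Y t := by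
    intro Y t ht
    have hl0 : (0:ℝ) ≤ 1/(1+t) := by positivity
    have hl1 : 1/(1+t) ≤ 1 := by
      rw [div_le_one (by linarith)]; linarith
    have hc := hconv (t • Y) (-Y) (1/(1+t)) hl0 hl1
    have hzero : (1/(1+t)) • (t • Y) + (1 - 1/(1+t)) • (-Y) = 0 := by
      rw [smul_smul, smul_neg, ← sub_eq_add_neg, ← sub_smul]
      have : 1/(1+t) * t - (1 - 1/(1+t)) = 0 := by field_simp; ring
      rw [this, zero_smul]
    rw [hzero, hφ0] at hc
    have h1t : (0:ℝ) < 1 + t := by linarith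
    rw [hq]
    dsimp only
    rw [le_div_iff₀ ht]
    have h1 : 1 - 1/(1+t) = t/(1+t) := by
      rw [one_sub_div (ne_of_gt h1t), add_sub_cancel_left]
    rw [h1] at hc
    have := mul_le_mul_of_nonneg_left hc (le_of_lt h1t)
    have hexp : (1+t) * (1/(1+t) * φ (t • Y) + t/(1+t) * φ (-Y)) = φ (t • Y) + t * φ (-Y) := by
      field_simp
    rw [mul_zero, hexp] at this
    nlinarith
  -- monotonicity of quotients
  have hmono : ∀ (Y : E) (s t : ℝ), 0 < s → s ≤ t → q Y s ≤ q Y t := by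
    intro Y s t hs hst
    have ht : 0 < t := lt_of_lt_of_le hs hst
    have h0 : (0:ℝ) ≤ s/t := by positivity
    have h1 : s/t ≤ 1 := by rw [div_le_one ht]; exact hst
    have := hscale (t • Y) (s/t) h0 h1
    rw [smul_smul, div_mul_cancel₀ _ (ne_of_gt ht)] at this
    rw [hq]; dsimp only
    rw [div_le_div_iff₀ hs ht]
    calc φ (s • Y) * t ≤ (s/t * φ (t • Y)) * t := by nlinarith
      _ = φ (t • Y) * s := by field_simp
  set A : E → Set ℝ := fun Y => (fun t => q Y t) '' Set.Ioi (0:ℝ) with hA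
  have hAne : ∀ Y, (A Y).Nonempty := fun Y => ⟨q Y 1, 1, Set.mem_Ioi.2 one_pos, rfl⟩
  have hAbdd : ∀ Y, BddBelow (A Y) := by
    intro Y
    refine ⟨-φ (-Y), ?_⟩
    rintro x ⟨t, ht, rfl⟩
    exact hlb Y t ht
  set p : E → ℝ := fun Y => sInf (A Y) with hp
  have hple : ∀ (Y : E) (t : ℝ), 0 < t → p Y ≤ q Y t := by
    intro Y t ht
    exact csInf_le (hAbdd Y) ⟨t, ht, rfl⟩
  have hpφ : ∀ Y, p Y ≤ φ Y := by
    intro Y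
    have := hple Y 1 one_pos
    simpa [hq] using this
  -- subadditivity
  have hpadd : ∀ Y Z, p (Y + Z) ≤ p Y + p Z := by
    intro Y Z
    refine le_of_forall_pos_le_add (fun ε hε => ?_)
    obtain ⟨a, ⟨s₁, hs₁, rfl⟩, ha⟩ := exists_lt_of_csInf_lt (hAne Y) (lt_add_of_pos_right (p Y) (half_pos hε))
    obtain ⟨b, ⟨s₂, hs₂, rfl⟩, hb⟩ := exists_lt_of_csInf_lt (hAne Z) (lt_add_of_pos_right (p Z) (half_pos hε))
    rw [Set.mem_Ioi] at hs₁ hs₂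
    set u := min s₁ s₂ / 2 with hu
    have hu0 : 0 < u := by positivity
    have h2u1 : 2 * u ≤ s₁ := by
      have := min_le_left s₁ s₂; rw [hu]; linarith
    have h2u2 : 2 * u ≤ s₂ := by
      have := min_le_right s₁ s₂; rw [hu]; linarith
    have key : q (Y + Z) u ≤ q Y (2*u) + q Z (2*u) := by
      have hc := hconv ((2*u) • Y) ((2*u) • Z) (1/2) (by norm_num) (by norm_num)
      have he : (1/2 : ℝ) • ((2*u) • Y) + (1 - 1/2 : ℝ) • ((2*u) • Z) = u • (Y + Z) := by
        rw [smul_smul, smul_smul, smul_add,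
          show (1/2:ℝ)*(2*u) = u by ring, show (1-1/2:ℝ)*(2*u) = u by ring]
      rw [he] at hc
      rw [hq]; dsimp only
      rw [div_add_div _ _ (ne_of_gt (by linarith : (0:ℝ) < 2*u)) (ne_of_gt (by linarith : (0:ℝ) < 2*u))]
      rw [div_le_div_iff₀ hu0 (by positivity)]
      nlinarith [hc]
    calc p (Y + Z) ≤ q (Y + Z) u := hple _ u hu0
      _ ≤ q Y (2*u) + q Z (2*u) := key
      _ ≤ q Y s₁ + q Z s₂ := add_le_add (hmono Y _ _ (by linarith) h2u1) (hmono Z _ _ (by linarith) h2u2)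
      _ ≤ (p Y + ε/2) + (p Z + ε/2) := add_le_add (le_of_lt ha) (le_of_lt hb)
      _ = p Y + p Z + ε := by ring
  -- positive homogeneity
  have hphom : ∀ (c : ℝ), 0 < c → ∀ Y, p (c • Y) = c * p Y := by
    intro c hc Y
    have hset : A (c • Y) = c • A Y := by
      ext x
      constructor
      · rintro ⟨t, ht, rfl⟩
        rw [Set.mem_Ioi] at ht
        refine ⟨q Y (t*c), ⟨t*c, Set.mem_Ioi.2 (by positivity), rfl⟩, ?_⟩
        rw [hq]; dsimp only
        rw [smul_smul, smul_eq_mul]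
        field_simp
      · rintro ⟨y, ⟨s, hs, rfl⟩, rfl⟩
        rw [Set.mem_Ioi] at hs
        refine ⟨s/c, Set.mem_Ioi.2 (by positivity), ?_⟩
        rw [hq]; dsimp only
        rw [smul_smul, div_mul_cancel₀ _ (ne_of_gt hc), smul_eq_mul]
        field_simp
    rw [hp]; dsimp only
    rw [hset, Real.sInf_smul_of_nonneg (le_of_lt hc), smul_eq_mul]
  -- Hahn-Banach
  have hf : ∀ x : ((⊥ : E →ₗ.[ℝ] ℝ)).domain, (⊥ : E →ₗ.[ℝ] ℝ) x ≤ p x := by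
    intro x
    have hx : (x : E) = 0 := by
      exact (Submodule.mem_bot ℝ).mp x.2
    have hp0 : 0 ≤ p 0 := by
      have := hpadd 0 0
      rw [add_zero] at this
      linarith
    have hval : (⊥ : E →ₗ.[ℝ] ℝ) x = 0 := rfl
    rw [hval, hx]
    exact hp0
  obtain ⟨g, -, hg⟩ := exists_extension_of_le_sublinear (⊥ : E →ₗ.[ℝ] ℝ) p
    (fun c hc x => hphom c hc x) (fun x y => hpadd x y) hf
  exact ⟨g, fun Z => le_trans (hg Z) (hpφ Z)⟩


open MeasureTheory

/-- The set of bounded measurable functions `Ω → ℝ`. -/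
def Bb (Ω : Type*) [MeasurableSpace Ω] : Set (Ω → ℝ) :=
  {X | Measurable X ∧ ∃ c : ℝ, ∀ ω, |X ω| ≤ c}

/-- `H` is a premium principle on `C`: (P1) cash additivity and
(P2) `H 0 = 0` and nonnegativity on nonnegative claims. -/
def IsPremium {Ω : Type*} (C : Set (Ω → ℝ)) (H : (Ω → ℝ) → ℝ) : Prop :=
  (∀ X ∈ C, ∀ m : ℝ, H (fun ω => X ω + m) = H X + m) ∧
  H (fun _ => 0) = 0 ∧
  ∀ X ∈ C, (∀ ω, 0 ≤ X ω) → 0 ≤ H X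

/-- `R` is a (monetary) risk measure on `B_b`. -/
def IsRisk {Ω : Type*} [MeasurableSpace Ω] (R : (Ω → ℝ) → ℝ) : Prop :=
  (∀ X ∈ Bb Ω, ∀ m : ℝ, R (fun ω => X ω + m) = R X + m) ∧
  R (fun _ => 0) = 0 ∧
  ∀ X ∈ Bb Ω, ∀ Y ∈ Bb Ω, (∀ ω, X ω ≤ Y ω) → R X ≤ R Y

/-- `D` is a deviation measure on `C`. -/
def IsDeviation {Ω : Type*} (C : Set (Ω → ℝ)) (D : (Ω → ℝ) → ℝ) : Prop :=
  (∀ X ∈ C, ∀ m : ℝ, D (fun ω => X ω + m) = D X) ∧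
  D (fun _ => 0) = 0 ∧
  ∀ X ∈ C, 0 ≤ D X

/-- The maximal risk measure `R_Max(X) = inf {H X₀ | X₀ ∈ C, X₀ ≥ X}`. -/
noncomputable def RMax {Ω : Type*} (C : Set (Ω → ℝ)) (H : (Ω → ℝ) → ℝ) (X : Ω → ℝ) : ℝ :=
  sInf {y | ∃ X₀ ∈ C, (∀ ω, X ω ≤ X₀ ω) ∧ H X₀ = y}

/-- The minimal deviation measure `D_Min = H - R_Max`. -/
noncomputable def DMin {Ω : Type*} (C : Set (Ω → ℝ)) (H : (Ω → ℝ) → ℝ) (X : Ω → ℝ) : ℝ :=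
  H X - RMax C H X

/-- A normalized positive linear functional on `B_b` (a finitely additive probability). -/
def IsNPLF {Ω : Type*} [MeasurableSpace Ω] (μ : (Ω → ℝ) → ℝ) : Prop :=
  (∀ X ∈ Bb Ω, ∀ Y ∈ Bb Ω, μ (fun ω => X ω + Y ω) = μ X + μ Y) ∧
  (∀ X ∈ Bb Ω, ∀ c : ℝ, μ (fun ω => c * X ω) = c * μ X) ∧
  (∀ X ∈ Bb Ω, (∀ ω, 0 ≤ X ω) → 0 ≤ μ X) ∧
  μ (fun _ => 1) = 1

/-- The convex dual `H*(μ) = sup_{X ∈ C} (μ X - H X)`, valued in `EReal`. -/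
noncomputable def Hstar {Ω : Type*} (C : Set (Ω → ℝ)) (H : (Ω → ℝ) → ℝ)
    (μ : (Ω → ℝ) → ℝ) : EReal :=
  ⨆ X ∈ C, ((μ X - H X : ℝ) : EReal)

/-- `H` is convex on `C`. -/
def IsConvexOn {Ω : Type*} (C : Set (Ω → ℝ)) (H : (Ω → ℝ) → ℝ) : Prop :=
  ∀ X ∈ C, ∀ Y ∈ C, ∀ l : ℝ, 0 ≤ l → l ≤ 1 →
    H (fun ω => l * X ω + (1 - l) * Y ω) ≤ l * H X + (1 - l) * H Y

section AuxBb

variable {Ω : Type*} [MeasurableSpace Ω]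

lemma Bb_const' (m : ℝ) : (fun _ : Ω => m) ∈ Bb Ω :=
  ⟨measurable_const, |m|, fun _ => le_refl _⟩

lemma Bb_add' {X Y : Ω → ℝ} (hX : X ∈ Bb Ω) (hY : Y ∈ Bb Ω) :
    (fun ω => X ω + Y ω) ∈ Bb Ω := by
  obtain ⟨mX, cX, hcX⟩ := hX
  obtain ⟨mY, cY, hcY⟩ := hY
  exact ⟨mX.add mY, cX + cY, fun ω => (abs_add_le _ _).trans (add_le_add (hcX ω) (hcY ω))⟩

lemma Bb_smul' {X : Ω → ℝ} (hX : X ∈ Bb Ω) (c : ℝ) : (fun ω => c * X ω) ∈ Bb Ω := by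
  obtain ⟨mX, cX, hcX⟩ := hX
  refine ⟨mX.const_mul c, |c| * cX, fun ω => ?_⟩
  rw [abs_mul]
  exact mul_le_mul_of_nonneg_left (hcX ω) (abs_nonneg c)

lemma Bb_neg' {X : Ω → ℝ} (hX : X ∈ Bb Ω) : (fun ω => -X ω) ∈ Bb Ω := by
  have := Bb_smul' hX (-1)
  simpa using this

lemma Bb_sub' {X Y : Ω → ℝ} (hX : X ∈ Bb Ω) (hY : Y ∈ Bb Ω) :
    (fun ω => X ω - Y ω) ∈ Bb Ω := by
  have := Bb_add' hX (Bb_neg' hY)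
  simpa [sub_eq_add_neg] using this

/-- `Bb Ω` as a submodule of `Ω → ℝ`. -/
def BbSub (Ω : Type*) [MeasurableSpace Ω] : Submodule ℝ (Ω → ℝ) where
  carrier := Bb Ω
  add_mem' := fun hX hY => Bb_add' hX hY
  zero_mem' := Bb_const' 0
  smul_mem' := fun c _ hX => Bb_smul' hX c


lemma mem_BbSub {Y : Ω → ℝ} (h : Y ∈ Bb Ω) : Y ∈ BbSub Ω := h

lemma mem_Bb_of_BbSub {Y : Ω → ℝ} (h : Y ∈ BbSub Ω) : Y ∈ Bb Ω := h

variable {C : Set (Ω → ℝ)} {H : (Ω → ℝ) → ℝ}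

lemma rmaxSet_nonempty (hconst : ∀ m : ℝ, (fun _ : Ω => m) ∈ C) {Y : Ω → ℝ} (hY : Y ∈ Bb Ω) :
    {y | ∃ X₀ ∈ C, (∀ ω, Y ω ≤ X₀ ω) ∧ H X₀ = y}.Nonempty := by
  obtain ⟨-, c, hc⟩ := hY
  exact ⟨H (fun _ => c), (fun _ => c), hconst c, fun ω => (abs_le.1 (hc ω)).2, rfl⟩

lemma rmaxSet_bddBelow (hconst : ∀ m : ℝ, (fun _ : Ω => m) ∈ C)
    (haddC : ∀ X ∈ C, ∀ Y ∈ C, (fun ω => X ω + Y ω) ∈ C)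
    (hH : IsPremium C H) {Y : Ω → ℝ} (hY : Y ∈ Bb Ω) :
    BddBelow {y | ∃ X₀ ∈ C, (∀ ω, Y ω ≤ X₀ ω) ∧ H X₀ = y} := by
  obtain ⟨-, c, hc⟩ := hY
  refine ⟨-c, ?_⟩
  rintro y ⟨X₀, hX₀C, hge, rfl⟩
  have h1 : (fun ω => X₀ ω + c) ∈ C := haddC X₀ hX₀C _ (hconst c)
  have h2 : 0 ≤ H (fun ω => X₀ ω + c) := by
    refine hH.2.2 _ h1 (fun ω => ?_)
    have := (abs_le.1 (hc ω)).1
    have := hge ω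
    linarith
  have h3 : H (fun ω => X₀ ω + c) = H X₀ + c := hH.1 X₀ hX₀C c
  linarith

lemma RMax_le (hconst : ∀ m : ℝ, (fun _ : Ω => m) ∈ C)
    (haddC : ∀ X ∈ C, ∀ Y ∈ C, (fun ω => X ω + Y ω) ∈ C)
    (hH : IsPremium C H) {Y : Ω → ℝ} (hY : Y ∈ Bb Ω)
    {X₀ : Ω → ℝ} (hX₀ : X₀ ∈ C) (hge : ∀ ω, Y ω ≤ X₀ ω) :
    RMax C H Y ≤ H X₀ :=
  csInf_le (rmaxSet_bddBelow hconst haddC hH hY) ⟨X₀, hX₀, hge, rfl⟩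

lemma le_RMax (hconst : ∀ m : ℝ, (fun _ : Ω => m) ∈ C) {Y : Ω → ℝ} (hY : Y ∈ Bb Ω)
    {b : ℝ} (hb : ∀ X₀ ∈ C, (∀ ω, Y ω ≤ X₀ ω) → b ≤ H X₀) :
    b ≤ RMax C H Y := by
  refine le_csInf (rmaxSet_nonempty hconst hY) ?_
  rintro y ⟨X₀, hX₀, hge, rfl⟩
  exact hb X₀ hX₀ hge

lemma RMax_mono (hconst : ∀ m : ℝ, (fun _ : Ω => m) ∈ C)
    (haddC : ∀ X ∈ C, ∀ Y ∈ C, (fun ω => X ω + Y ω) ∈ C)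
    (hH : IsPremium C H) {Y Z : Ω → ℝ} (hY : Y ∈ Bb Ω) (hZ : Z ∈ Bb Ω)
    (h : ∀ ω, Y ω ≤ Z ω) : RMax C H Y ≤ RMax C H Z := by
  refine csInf_le_csInf (rmaxSet_bddBelow hconst haddC hH hY) (rmaxSet_nonempty hconst hZ) ?_
  rintro y ⟨X₀, hX₀, hge, rfl⟩
  exact ⟨X₀, hX₀, fun ω => (h ω).trans (hge ω), rfl⟩

lemma RMax_add_const (hconst : ∀ m : ℝ, (fun _ : Ω => m) ∈ C)
    (haddC : ∀ X ∈ C, ∀ Y ∈ C, (fun ω => X ω + Y ω) ∈ C)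
    (hH : IsPremium C H) {Y : Ω → ℝ} (hY : Y ∈ Bb Ω) (m : ℝ) :
    RMax C H (fun ω => Y ω + m) = RMax C H Y + m := by
  have key : ∀ (Z : Ω → ℝ), Z ∈ Bb Ω → ∀ r : ℝ,
      RMax C H (fun ω => Z ω + r) ≤ RMax C H Z + r := by
    intro Z hZ r
    have h1 : RMax C H (fun ω => Z ω + r) - r ≤ RMax C H Z := by
      refine le_RMax hconst hZ (fun X₀ hX₀ hge => ?_)
      have h2 : RMax C H (fun ω => Z ω + r) ≤ H (fun ω => X₀ ω + r) := by
        refine RMax_le hconst haddC hH (Bb_add' hZ (Bb_const' r))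
          (haddC X₀ hX₀ _ (hconst r)) (fun ω => by linarith [hge ω])
      rw [hH.1 X₀ hX₀ r] at h2
      linarith
    linarith
  have h1 := key Y hY m
  have h2 := key (fun ω => Y ω + m) (Bb_add' hY (Bb_const' m)) (-m)
  have h3 : (fun ω => (fun ω' => Y ω' + m) ω + -m) = Y := funext fun ω => by ring
  rw [h3] at h2
  linarith

lemma RMax_convex (hconst : ∀ m : ℝ, (fun _ : Ω => m) ∈ C)
    (haddC : ∀ X ∈ C, ∀ Y ∈ C, (fun ω => X ω + Y ω) ∈ C)
    (hsmulC : ∀ X ∈ C, ∀ c : ℝ, (fun ω => c * X ω) ∈ C)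
    (hH : IsPremium C H) (hconv : IsConvexOn C H)
    {Y Z : Ω → ℝ} (hY : Y ∈ Bb Ω) (hZ : Z ∈ Bb Ω)
    {l : ℝ} (h0 : 0 ≤ l) (h1 : l ≤ 1) :
    RMax C H (fun ω => l * Y ω + (1 - l) * Z ω) ≤ l * RMax C H Y + (1 - l) * RMax C H Z := by
  refine le_of_forall_pos_le_add (fun ε hε => ?_)
  obtain ⟨a, ⟨X₁, hX₁, hge₁, rfl⟩, ha⟩ := exists_lt_of_csInf_lt (rmaxSet_nonempty hconst hY)
    (lt_add_of_pos_right (RMax C H Y) hε)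
  obtain ⟨b, ⟨X₂, hX₂, hge₂, rfl⟩, hb⟩ := exists_lt_of_csInf_lt (rmaxSet_nonempty hconst hZ)
    (lt_add_of_pos_right (RMax C H Z) hε)
  have hW : (fun ω => l * X₁ ω + (1 - l) * X₂ ω) ∈ C :=
    haddC _ (hsmulC X₁ hX₁ l) _ (hsmulC X₂ hX₂ (1 - l))
  have hcombo : (fun ω => l * Y ω + (1 - l) * Z ω) ∈ Bb Ω :=
    Bb_add' (Bb_smul' hY l) (Bb_smul' hZ (1 - l))
  have hge : ∀ ω, l * Y ω + (1 - l) * Z ω ≤ l * X₁ ω + (1 - l) * X₂ ω := fun ω =>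
    add_le_add (mul_le_mul_of_nonneg_left (hge₁ ω) h0)
      (mul_le_mul_of_nonneg_left (hge₂ ω) (by linarith))
  have h2 := RMax_le hconst haddC hH hcombo hW hge
  have h3 := hconv X₁ hX₁ X₂ hX₂ l h0 h1
  nlinarith [h2, h3, ha, hb]
end AuxBb



/-- for a convex premium principle,
`D_Min(X) = min_{μ : H*(μ) < ∞} (D_μ(X) + H*(μ))` with
`D_μ(X) = H(X − μ(X))`, the minimum being attained. -/
theorem DMin_dual_representation {Ω : Type*} [MeasurableSpace Ω]
    (C : Set (Ω → ℝ)) (H : (Ω → ℝ) → ℝ)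
    (hCB : C ⊆ Bb Ω)
    (hconst : ∀ m : ℝ, (fun _ => m) ∈ C)
    (haddC : ∀ X ∈ C, ∀ Y ∈ C, (fun ω => X ω + Y ω) ∈ C)
    (hsmulC : ∀ X ∈ C, ∀ c : ℝ, (fun ω => c * X ω) ∈ C)
    (hH : IsPremium C H) (hconv : IsConvexOn C H) :
    ∀ X ∈ C,
      (∃ μ : (Ω → ℝ) → ℝ, IsNPLF μ ∧ Hstar C H μ < ⊤ ∧
        ((DMin C H X : ℝ) : EReal) =
          ((H (fun ω => X ω - μ X) : ℝ) : EReal) + Hstar C H μ) ∧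
      (∀ μ : (Ω → ℝ) → ℝ, IsNPLF μ → Hstar C H μ < ⊤ →
        ((DMin C H X : ℝ) : EReal) ≤
          ((H (fun ω => X ω - μ X) : ℝ) : EReal) + Hstar C H μ) := by
  intro X hX
  classical
  have hXBb : X ∈ Bb Ω := hCB hX
  -- the general inequality (second conjunct)
  have hgen : ∀ μ : (Ω → ℝ) → ℝ, IsNPLF μ → Hstar C H μ < ⊤ →
      ((DMin C H X : ℝ) : EReal) ≤ ((H (fun ω => X ω - μ X) : ℝ) : EReal) + Hstar C H μ := by
    intro μ hμ htop
    obtain ⟨hadd, hsmul, hpos, hone⟩ := hμ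
    have hμ0 : μ (fun _ => 0) = 0 := by
      have h := hsmul (fun _ => (1:ℝ)) (Bb_const' 1) 0
      simpa using h
    have hbot0 : ((0:ℝ) : EReal) ≤ Hstar C H μ := by
      have h0 : (((μ (fun _ : Ω => (0:ℝ))) - H (fun _ => (0:ℝ)) : ℝ) : EReal) ≤ Hstar C H μ :=
        le_iSup₂ (f := fun Y (_ : Y ∈ C) => ((μ Y - H Y : ℝ) : EReal)) (fun _ => (0:ℝ)) (hconst 0)
      rw [hμ0, hH.2.1] at h0
      simpa using h0
    have hne_top : Hstar C H μ ≠ ⊤ := ne_of_lt htop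
    have hne_bot : Hstar C H μ ≠ ⊥ := by
      intro h
      rw [h] at hbot0
      exact (EReal.bot_lt_coe _).not_ge hbot0
    set b := (Hstar C H μ).toReal with hb
    have hcoe : ((b : ℝ) : EReal) = Hstar C H μ := EReal.coe_toReal hne_top hne_bot
    have hYle : ∀ Y ∈ C, μ Y - H Y ≤ b := by
      intro Y hY
      have h : ((μ Y - H Y : ℝ) : EReal) ≤ Hstar C H μ :=
        le_iSup₂ (f := fun Y (_ : Y ∈ C) => ((μ Y - H Y : ℝ) : EReal)) Y hY
      rw [← hcoe] at h
      exact EReal.coe_le_coe_iff.1 h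
    have hRMax : μ X - b ≤ RMax C H X := by
      refine le_RMax hconst hXBb (fun X₀ hX₀ hge => ?_)
      have hX₀B := hCB hX₀
      have hsub : (fun ω => X₀ ω - X ω) ∈ Bb Ω := Bb_sub' hX₀B hXBb
      have hposv : 0 ≤ μ (fun ω => X₀ ω - X ω) :=
        hpos _ hsub (fun ω => by linarith [hge ω])
      have haddv := hadd X hXBb _ hsub
      have hfe : (fun ω => X ω + (fun ω' => X₀ ω' - X ω') ω) = X₀ := funext fun ω => by ring
      rw [hfe] at haddv
      have hμle : μ X ≤ μ X₀ := by linarith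
      have h := hYle X₀ hX₀
      linarith
    have hHsub : H (fun ω => X ω - μ X) = H X - μ X := by
      have h := hH.1 X hX (-(μ X))
      have hfe : (fun ω => X ω + -(μ X)) = (fun ω => X ω - μ X) :=
        funext fun ω => (sub_eq_add_neg _ _).symm
      rw [hfe] at h
      rw [h]; ring
    have hDMin : DMin C H X = H X - RMax C H X := rfl
    have hreal : DMin C H X ≤ H (fun ω => X ω - μ X) + b := by
      rw [hDMin, hHsub]; linarith
    calc ((DMin C H X : ℝ) : EReal)
        ≤ ((H (fun ω => X ω - μ X) + b : ℝ) : EReal) := EReal.coe_le_coe_iff.2 hreal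
      _ = ((H (fun ω => X ω - μ X) : ℝ) : EReal) + ((b : ℝ) : EReal) := EReal.coe_add _ _
      _ = _ := by rw [hcoe]
  refine ⟨?_, hgen⟩
  -- construct the optimal μ via a subgradient of Z ↦ RMax (X + Z) at 0
  have hφ0 : (fun Z : BbSub Ω => RMax C H (fun ω => X ω + (Z : Ω → ℝ) ω) - RMax C H X) 0 = 0 := by
    have hfe : (fun ω => X ω + ((0 : BbSub Ω) : Ω → ℝ) ω) = X := funext fun ω => by simp
    dsimp only
    rw [hfe]; ring
  have hφconv : ∀ Y Z : BbSub Ω, ∀ l : ℝ, 0 ≤ l → l ≤ 1 →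
      (fun Z : BbSub Ω => RMax C H (fun ω => X ω + (Z : Ω → ℝ) ω) - RMax C H X) (l • Y + (1 - l) • Z)
        ≤ l * (fun Z : BbSub Ω => RMax C H (fun ω => X ω + (Z : Ω → ℝ) ω) - RMax C H X) Y
          + (1 - l) * (fun Z : BbSub Ω => RMax C H (fun ω => X ω + (Z : Ω → ℝ) ω) - RMax C H X) Z := by
    intro Y Z l h0 h1
    have hYB : ((Y : Ω → ℝ)) ∈ Bb Ω := mem_Bb_of_BbSub Y.2
    have hZB : ((Z : Ω → ℝ)) ∈ Bb Ω := mem_Bb_of_BbSub Z.2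
    have hXY : (fun ω => X ω + (Y : Ω → ℝ) ω) ∈ Bb Ω := Bb_add' hXBb hYB
    have hXZ : (fun ω => X ω + (Z : Ω → ℝ) ω) ∈ Bb Ω := Bb_add' hXBb hZB
    have hfe : (fun ω => X ω + ((l • Y + (1 - l) • Z : BbSub Ω) : Ω → ℝ) ω)
        = (fun ω => l * (X ω + (Y : Ω → ℝ) ω) + (1 - l) * (X ω + (Z : Ω → ℝ) ω)) := by
      funext ω
      simp only [Submodule.coe_add, Submodule.coe_smul, Pi.add_apply, Pi.smul_apply,
        smul_eq_mul]
      ring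
    have hcvx := RMax_convex hconst haddC hsmulC hH hconv hXY hXZ h0 h1
    dsimp only
    rw [hfe]
    nlinarith [hcvx]
  obtain ⟨g, hg⟩ := exists_subgradient'
    (fun Z : BbSub Ω => RMax C H (fun ω => X ω + (Z : Ω → ℝ) ω) - RMax C H X) hφ0 hφconv
  set μ : (Ω → ℝ) → ℝ := fun Y => if h : Y ∈ Bb Ω then g ⟨Y, mem_BbSub h⟩ else 0 with hμdef
  have hμval : ∀ (Y : Ω → ℝ) (h : Y ∈ Bb Ω), μ Y = g ⟨Y, mem_BbSub h⟩ := fun Y h => dif_pos h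
  -- positivity of g on nonnegative elements
  have hgpos : ∀ (W : Ω → ℝ) (hW : W ∈ Bb Ω), (∀ ω, 0 ≤ W ω) → 0 ≤ g ⟨W, mem_BbSub hW⟩ := by
    intro W hW hWpos
    have h1 : g (-⟨W, mem_BbSub hW⟩) ≤ RMax C H (fun ω => X ω + -W ω) - RMax C H X := hg _
    have h2 : RMax C H (fun ω => X ω + -W ω) ≤ RMax C H X :=
      RMax_mono hconst haddC hH (Bb_add' hXBb (Bb_neg' hW)) hXBb (fun ω => by
        have := hWpos ω; linarith)
    rw [map_neg] at h1
    linarith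
  have hNPLF : IsNPLF μ := by
    refine ⟨?_, ?_, ?_, ?_⟩
    · intro Y hY Z hZ
      rw [hμval _ (Bb_add' hY hZ), hμval _ hY, hμval _ hZ]
      rw [show (⟨fun ω => Y ω + Z ω, mem_BbSub (Bb_add' hY hZ)⟩ : BbSub Ω) = ⟨Y, mem_BbSub hY⟩ + ⟨Z, mem_BbSub hZ⟩
        from Subtype.ext rfl, map_add]
    · intro Y hY c
      rw [hμval _ (Bb_smul' hY c), hμval _ hY]
      rw [show (⟨fun ω => c * Y ω, mem_BbSub (Bb_smul' hY c)⟩ : BbSub Ω) = c • ⟨Y, mem_BbSub hY⟩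
        from Subtype.ext rfl, LinearMap.map_smul, smul_eq_mul]
    · intro Y hY hYpos
      rw [hμval _ hY]
      exact hgpos Y hY hYpos
    · rw [hμval _ (Bb_const' 1)]
      have h1 : g ⟨fun _ => 1, mem_BbSub (Bb_const' 1)⟩ ≤ RMax C H (fun ω => X ω + 1) - RMax C H X := hg _
      have h2 : g (-⟨fun _ => 1, mem_BbSub (Bb_const' 1)⟩) ≤ RMax C H (fun ω => X ω + -1) - RMax C H X := hg _
      have he1 : RMax C H (fun ω => X ω + 1) = RMax C H X + 1 :=
        RMax_add_const hconst haddC hH hXBb 1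
      have he2 : RMax C H (fun ω => X ω + -1) = RMax C H X + -1 :=
        RMax_add_const hconst haddC hH hXBb (-1)
      rw [map_neg] at h2
      rw [he1] at h1
      rw [he2] at h2
      linarith
  have hμX : μ X = g ⟨X, mem_BbSub hXBb⟩ := hμval X hXBb
  -- Hstar μ = μ X - RMax X
  have hstar_le : Hstar C H μ ≤ ((μ X - RMax C H X : ℝ) : EReal) := by
    refine iSup₂_le (fun Y hY => ?_)
    have hYB := hCB hY
    have h1 : g (⟨Y, mem_BbSub hYB⟩ - ⟨X, mem_BbSub hXBb⟩) ≤ RMax C H (fun ω => X ω + (Y ω - X ω)) - RMax C H X :=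
      hg _
    have hfe : (fun ω => X ω + (Y ω - X ω)) = Y := funext fun ω => by ring
    rw [hfe, map_sub] at h1
    have h2 : RMax C H Y ≤ H Y := RMax_le hconst haddC hH hYB hY (fun ω => le_refl _)
    have h3 : μ Y - H Y ≤ μ X - RMax C H X := by
      rw [hμval Y hYB, hμX]; linarith
    exact EReal.coe_le_coe_iff.2 h3
  have hterm : ∀ X₀ ∈ C, (∀ ω, X ω ≤ X₀ ω) → ((μ X - H X₀ : ℝ) : EReal) ≤ Hstar C H μ := by
    intro X₀ hX₀ hge
    have hX₀B := hCB hX₀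
    have hd : (fun ω => X₀ ω - X ω) ∈ Bb Ω := Bb_sub' hX₀B hXBb
    have hposg : 0 ≤ g (⟨X₀, mem_BbSub hX₀B⟩ - ⟨X, mem_BbSub hXBb⟩) := by
      have h := hgpos _ hd (fun ω => by linarith [hge ω])
      have he : (⟨fun ω => X₀ ω - X ω, mem_BbSub hd⟩ : BbSub Ω) = ⟨X₀, mem_BbSub hX₀B⟩ - ⟨X, mem_BbSub hXBb⟩ :=
        Subtype.ext rfl
      rwa [he] at h
    rw [map_sub] at hposg
    have hμle : μ X - H X₀ ≤ μ X₀ - H X₀ := by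
      rw [hμval X₀ hX₀B, hμX]; linarith
    have h2 : ((μ X₀ - H X₀ : ℝ) : EReal) ≤ Hstar C H μ :=
      le_iSup₂ (f := fun Y (_ : Y ∈ C) => ((μ Y - H Y : ℝ) : EReal)) X₀ hX₀
    exact le_trans (EReal.coe_le_coe_iff.2 hμle) h2
  have hstar_ge : ((μ X - RMax C H X : ℝ) : EReal) ≤ Hstar C H μ := by
    obtain ⟨y0, X₀, hX₀, hge₀, hy0⟩ := rmaxSet_nonempty (H := H) hconst hXBb
    have hbot : ((μ X - H X₀ : ℝ) : EReal) ≤ Hstar C H μ := hterm X₀ hX₀ hge₀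
    have hne_bot : Hstar C H μ ≠ ⊥ := by
      intro h
      rw [h] at hbot
      exact (EReal.bot_lt_coe _).not_ge hbot
    have hne_top : Hstar C H μ ≠ ⊤ := by
      intro h
      rw [h] at hstar_le
      exact (EReal.coe_lt_top _).not_ge hstar_le
    have hcoe : (((Hstar C H μ).toReal : ℝ) : EReal) = Hstar C H μ :=
      EReal.coe_toReal hne_top hne_bot
    rw [← hcoe, EReal.coe_le_coe_iff]
    have hR : μ X - (Hstar C H μ).toReal ≤ RMax C H X := by
      refine le_RMax hconst hXBb (fun X₀' hX₀' hge' => ?_)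
      have h := hterm X₀' hX₀' hge'
      rw [← hcoe, EReal.coe_le_coe_iff] at h
      linarith
    linarith
  have hstar_eq : Hstar C H μ = ((μ X - RMax C H X : ℝ) : EReal) :=
    le_antisymm hstar_le hstar_ge
  refine ⟨μ, hNPLF, ?_, ?_⟩
  · rw [hstar_eq]
    exact EReal.coe_lt_top _
  · rw [hstar_eq]
    have hHsub : H (fun ω => X ω - μ X) = H X - μ X := by
      have h := hH.1 X hX (-(μ X))
      have hfe : (fun ω => X ω + -(μ X)) = (fun ω => X ω - μ X) :=
        funext fun ω => (sub_eq_add_neg _ _).symm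
      rw [hfe] at h
      rw [h]; ring
    rw [← EReal.coe_add]
    have hDMin : DMin C H X = H (fun ω => X ω - μ X) + (μ X - RMax C H X) := by
      rw [hHsub]
      have : DMin C H X = H X - RMax C H X := rfl
      rw [this]; ring
    exact congrArg _ hDMin
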